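/- Assume the non-correlation condition τ(y) σ(x,y)^T = 0 for all x ∈ ℝ^n and y ∈ ℝ^m. If (λ, w) is a classical solution of the critical cell problem at (x, p) and (λ̄, w̄) is a classical solution of the critical cell problem at (x̄, p̄), then min_{y ∈ ℝ^m}(|σ(x,y)^T p|² − |σ(x̄,y)^T p̄|²) ≤ λ − λ̄ ≤ max_{y ∈ ℝ^m}(|σ(x,y)^T p|² − |σ(x̄,y)^T p̄|²). -/

import Mathlib

open Matrix MeasureTheory Set

noncomputable section

/-- Euclidean norm of a vector in `ℝ^k`. -/
def en {k : ℕ} (v : Fin k → ℝ) : ℝ := Real.sqrt (v ⬝ᵥ v)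

/-- Squared Euclidean norm. -/
def sq2 {k : ℕ} (v : Fin k → ℝ) : ℝ := v ⬝ᵥ v

/-- Partial derivative in the `i`-th coordinate direction. -/
def pd {m : ℕ} (w : (Fin m → ℝ) → ℝ) (i : Fin m) (y : Fin m → ℝ) : ℝ :=
  fderiv ℝ w y (Pi.single i 1)

/-- Gradient. -/
def vgrad {m : ℕ} (w : (Fin m → ℝ) → ℝ) (y : Fin m → ℝ) : Fin m → ℝ := fun i => pd w i y

/-- Hessian matrix. -/
def vhess {m : ℕ} (w : (Fin m → ℝ) → ℝ) (y : Fin m → ℝ) : Matrix (Fin m) (Fin m) ℝ :=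
  Matrix.of fun i j => pd (pd w j) i y

/-- `ℤ^m`-periodicity. -/
def ZPer {m : ℕ} (w : (Fin m → ℝ) → ℝ) : Prop :=
  ∀ (y : Fin m → ℝ) (k : Fin m → ℤ), w (y + fun i => (k i : ℝ)) = w y

/-- Standing hypotheses on the data. -/
structure StandingHyp {n m r : ℕ}
    (σ : (Fin n → ℝ) → (Fin m → ℝ) → Matrix (Fin n) (Fin r) ℝ)
    (b : (Fin m → ℝ) → Fin m → ℝ)
    (τ : (Fin m → ℝ) → Matrix (Fin m) (Fin r) ℝ) : Prop where
  σ_bdd : ∃ C : ℝ, ∀ x y i j, |σ x y i j| ≤ C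
  σ_lip : ∃ L : ℝ, ∀ x x' y y' i j, |σ x y i j - σ x' y' i j| ≤ L * (en (x - x') + en (y - y'))
  σ_per : ∀ x y (k : Fin m → ℤ), σ x (y + fun l => (k l : ℝ)) = σ x y
  b_lip : ∃ L : ℝ, ∀ y y' i, |b y i - b y' i| ≤ L * en (y - y')
  b_per : ∀ y (k : Fin m → ℤ), b (y + fun l => (k l : ℝ)) = b y
  τ_lip : ∃ L : ℝ, ∀ y y' i j, |τ y i j - τ y' i j| ≤ L * en (y - y')
  τ_per : ∀ y (k : Fin m → ℤ), τ (y + fun l => (k l : ℝ)) = τ y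
  τ_nondeg : ∃ θ : ℝ, 0 < θ ∧ ∀ y ξ, θ * sq2 ξ ≤ sq2 ((τ y)ᵀ *ᵥ ξ)

/-- Classical solution of the critical cell problem at `(x, p)`. -/
def IsCriticalSol {n m r : ℕ}
    (σ : (Fin n → ℝ) → (Fin m → ℝ) → Matrix (Fin n) (Fin r) ℝ)
    (b : (Fin m → ℝ) → Fin m → ℝ)
    (τ : (Fin m → ℝ) → Matrix (Fin m) (Fin r) ℝ)
    (x p : Fin n → ℝ) (lam : ℝ) (w : (Fin m → ℝ) → ℝ) : Prop :=
  ContDiff ℝ 2 w ∧ ZPer w ∧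
    ∀ y, lam = sq2 ((σ x y)ᵀ *ᵥ p)
        + 2 * ((τ y *ᵥ ((σ x y)ᵀ *ᵥ p)) ⬝ᵥ vgrad w y)
        + b y ⬝ᵥ vgrad w y
        + sq2 ((τ y)ᵀ *ᵥ vgrad w y)
        + Matrix.trace (τ y * (τ y)ᵀ * vhess w y)

/-- Classical solution of the supercritical cell problem at `(x, p)`. -/
def IsSupercriticalSol {n m r : ℕ}
    (σ : (Fin n → ℝ) → (Fin m → ℝ) → Matrix (Fin n) (Fin r) ℝ)
    (b : (Fin m → ℝ) → Fin m → ℝ)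
    (τ : (Fin m → ℝ) → Matrix (Fin m) (Fin r) ℝ)
    (x p : Fin n → ℝ) (lam : ℝ) (w : (Fin m → ℝ) → ℝ) : Prop :=
  ContDiff ℝ 2 w ∧ ZPer w ∧
    ∀ y, lam = sq2 ((σ x y)ᵀ *ᵥ p) + b y ⬝ᵥ vgrad w y
        + Matrix.trace (τ y * (τ y)ᵀ * vhess w y)

/-- Classical solution of the subcritical cell problem at `(x, p)`. -/
def IsSubcriticalSol {n m r : ℕ}
    (σ : (Fin n → ℝ) → (Fin m → ℝ) → Matrix (Fin n) (Fin r) ℝ)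
    (τ : (Fin m → ℝ) → Matrix (Fin m) (Fin r) ℝ)
    (x p : Fin n → ℝ) (lam : ℝ) (w : (Fin m → ℝ) → ℝ) : Prop :=
  ContDiff ℝ 1 w ∧ ZPer w ∧
    ∀ y, lam = sq2 ((τ y)ᵀ *ᵥ vgrad w y + (σ x y)ᵀ *ᵥ p)


lemma deriv2_nonpos_at_localMax {g : ℝ → ℝ} (hg : ContDiff ℝ 2 g) (hmax : IsLocalMax g 0) :
    deriv (deriv g) 0 ≤ 0 := by
  by_contra hc
  push_neg at hc
  have hg2 : (2 : WithTop ℕ∞) = 1 + 1 := by norm_num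
  have hgdiff : Differentiable ℝ g := hg.differentiable (by norm_num)
  have hder : ContDiff ℝ 1 (deriv g) := ((contDiff_succ_iff_deriv (n := 1)).mp (hg2 ▸ hg)).2.2
  have hcont2 : Continuous (deriv (deriv g)) := hder.continuous_deriv le_rfl
  have hev : ∀ᶠ t in nhds (0:ℝ), 0 < deriv (deriv g) t :=
    (hcont2.continuousAt).eventually_const_lt hc
  obtain ⟨δ₁, hδ₁, h1⟩ := Metric.eventually_nhds_iff.mp hev
  obtain ⟨δ₂, hδ₂, h2⟩ := Metric.eventually_nhds_iff.mp hmax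
  set δ := min δ₁ δ₂ with hδdef
  have hδ : 0 < δ := lt_min hδ₁ hδ₂
  have hpos : ∀ t ∈ Ioo (-δ₁) δ₁, 0 < deriv (deriv g) t := by
    intro t ht
    exact h1 (by rw [Real.dist_eq, sub_zero]; exact abs_lt.mpr ⟨ht.1, ht.2⟩)
  -- deriv g strictly monotone on Ioo (-δ₁) δ₁
  have hmono : StrictMonoOn (deriv g) (Ioo (-δ₁) δ₁) := by
    apply strictMonoOn_of_deriv_pos (convex_Ioo _ _)
      (hder.continuous.continuousOn)
    intro t ht
    rw [interior_Ioo] at ht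
    exact hpos t ht
  have hd0 : deriv g 0 = 0 := hmax.deriv_eq_zero
  have hdpos : ∀ t ∈ Ioo (0:ℝ) δ₁, 0 < deriv g t := by
    intro t ht
    have := hmono (show (0:ℝ) ∈ Ioo (-δ₁) δ₁ by constructor <;> [linarith; linarith])
      (show t ∈ Ioo (-δ₁) δ₁ by constructor <;> [linarith [ht.1]; exact ht.2]) ht.1
    rw [hd0] at this; exact this
  -- g strictly monotone on Icc 0 (δ/2)
  have hgm : StrictMonoOn g (Icc (0:ℝ) (δ/2)) := by
    apply strictMonoOn_of_deriv_pos (convex_Icc _ _) (hgdiff.continuous.continuousOn)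
    intro t ht
    rw [interior_Icc] at ht
    exact hdpos t ⟨ht.1, by have := ht.2; have : δ ≤ δ₁ := min_le_left _ _; linarith [ht.2]⟩
  have hlt : g 0 < g (δ/2) := hgm ⟨le_rfl, by linarith⟩ ⟨by linarith, le_rfl⟩ (by linarith)
  have hle : g (δ/2) ≤ g 0 := by
    apply h2
    rw [Real.dist_eq, sub_zero, abs_of_pos (by linarith)]
    have : δ ≤ δ₂ := min_le_right _ _
    linarith
  linarith

-- fderiv applied to v = sum over coordinates
lemma fderiv_apply_eq_sum {m : ℕ} {f : (Fin m → ℝ) → ℝ} {y : Fin m → ℝ}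
    (hf : DifferentiableAt ℝ f y) (v : Fin m → ℝ) :
    fderiv ℝ f y v = ∑ i, v i * pd f i y := by
  have hv : v = ∑ i, v i • (Pi.single i (1:ℝ) : Fin m → ℝ) := by
    funext j
    simp [Pi.single_apply, Finset.sum_apply]
  conv_lhs => rw [hv]
  rw [map_sum]
  congr 1; funext i
  rw [(fderiv ℝ f y).map_smul]
  rfl

lemma pd_contDiff {m : ℕ} {u : (Fin m → ℝ) → ℝ} (hu : ContDiff ℝ 2 u) (i : Fin m) :
    ContDiff ℝ 1 (pd u i) := by
  have h1 : ContDiff ℝ 1 (fderiv ℝ u) := hu.fderiv_right (le_refl (1+1 : WithTop ℕ∞))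
  exact h1.clm_apply contDiff_const

lemma line_hasDerivAt {m : ℕ} (z v : Fin m → ℝ) (t : ℝ) :
    HasDerivAt (fun s : ℝ => z + s • v) v t := by
  simpa using ((hasDerivAt_id t).smul_const v).const_add z

lemma quad_nonpos {m : ℕ} {u : (Fin m → ℝ) → ℝ} (hu : ContDiff ℝ 2 u) {z : Fin m → ℝ}
    (hz : ∀ y, u y ≤ u z) (v : Fin m → ℝ) :
    v ⬝ᵥ (vhess u z *ᵥ v) ≤ 0 := by
  have hudiff : Differentiable ℝ u := hu.differentiable (by norm_num)
  set l : ℝ → (Fin m → ℝ) := fun s => z + s • v with hl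
  have hl0 : l 0 = z := by simp [hl]
  have hlc : ContDiff ℝ 2 l := by
    apply ContDiff.add contDiff_const
    exact ContDiff.smul contDiff_id contDiff_const
  set g : ℝ → ℝ := fun t => u (l t) with hg
  have hgc : ContDiff ℝ 2 g := hu.comp hlc
  have hgmax : IsLocalMax g 0 := by
    apply Filter.Eventually.of_forall
    intro t
    simp only [hg, hl0]
    exact hz (l t)
  -- first derivative of g
  have hd1 : ∀ t, HasDerivAt g (∑ i, v i * pd u i (l t)) t := by
    intro t
    have h1 : HasDerivAt g (fderiv ℝ u (l t) v) t :=
      (hudiff (l t)).hasFDerivAt.comp_hasDerivAt t (line_hasDerivAt z v t)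
    rwa [fderiv_apply_eq_sum (hudiff (l t)) v] at h1
  have hderiv_g : deriv g = fun t => ∑ i, v i * pd u i (l t) := by
    funext t; exact (hd1 t).deriv
  -- second derivative of g at 0
  have hd2 : HasDerivAt (fun t => ∑ i, v i * pd u i (l t))
      (∑ i, v i * ∑ k, v k * pd (pd u i) k z) 0 := by
    apply HasDerivAt.fun_sum
    intro i _
    have hpdiff : DifferentiableAt ℝ (pd u i) z :=
      ((pd_contDiff hu i).differentiable one_ne_zero) z
    have h2 : HasDerivAt (fun t => pd u i (l t)) (fderiv ℝ (pd u i) z v) 0 := by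
      have hz0 : HasFDerivAt (pd u i) (fderiv ℝ (pd u i) z) (l 0) := by
        rw [hl0]; exact hpdiff.hasFDerivAt
      exact hz0.comp_hasDerivAt 0 (line_hasDerivAt z v 0)
    rw [fderiv_apply_eq_sum hpdiff v] at h2
    exact h2.const_mul (v i)
  have hsecond : deriv (deriv g) 0 = ∑ i, v i * ∑ k, v k * pd (pd u i) k z := by
    rw [hderiv_g]; exact hd2.deriv
  have hle : deriv (deriv g) 0 ≤ 0 := deriv2_nonpos_at_localMax hgc hgmax
  rw [hsecond] at hle
  calc v ⬝ᵥ (vhess u z *ᵥ v) = ∑ i, v i * ∑ k, v k * pd (pd u i) k z := by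
        simp only [dotProduct, Matrix.mulVec, vhess, Matrix.of_apply, Finset.mul_sum]
        rw [Finset.sum_comm]
        congr 1; funext i
        congr 1; funext k
        ring
    _ ≤ 0 := hle

lemma exists_max_of_per {m : ℕ} {f : (Fin m → ℝ) → ℝ} (hf : Continuous f) (hper : ZPer f) :
    ∃ z, ∀ y, f y ≤ f z := by
  have hcomp : IsCompact (Icc (0 : Fin m → ℝ) 1) := isCompact_Icc
  have hne : (Icc (0 : Fin m → ℝ) 1).Nonempty := ⟨0, by constructor <;> intro i <;> norm_num⟩
  obtain ⟨z, _, hzmax⟩ := hcomp.exists_isMaxOn hne hf.continuousOn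
  refine ⟨z, fun y => ?_⟩
  set y' : Fin m → ℝ := fun i => Int.fract (y i) with hy'
  have hmem : y' ∈ Icc (0 : Fin m → ℝ) 1 := by
    constructor <;> intro i
    · exact Int.fract_nonneg _
    · exact le_of_lt (Int.fract_lt_one _)
  have heq : f y = f y' := by
    have := hper y' (fun i => ⌊y i⌋)
    rw [← this]
    congr 1
    funext i
    show y i = y' i + (⌊y i⌋ : ℝ)
    rw [hy']
    exact (Int.fract_add_floor (y i)).symm
  rw [heq]
  exact hzmax hmem

lemma trace_eq_sum_quad {m r : ℕ} (T : Matrix (Fin m) (Fin r) ℝ) (M : Matrix (Fin m) (Fin m) ℝ) :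
    Matrix.trace (T * Tᵀ * M) = ∑ j, (fun i => T i j) ⬝ᵥ (M *ᵥ fun i => T i j) := by
  rw [Matrix.mul_assoc, Matrix.trace_mul_comm]
  simp only [Matrix.trace, Matrix.diag, Matrix.mul_apply, Matrix.transpose_apply, dotProduct,
    Matrix.mulVec, Finset.sum_mul, Finset.mul_sum]
  congr 1; funext j
  rw [Finset.sum_comm]
  congr 1; funext i
  congr 1; funext k
  ring


lemma en_cont {m : ℕ} (y : Fin m → ℝ) : Continuous fun y' : Fin m → ℝ => en (y' - y) := by
  unfold en
  apply Real.continuous_sqrt.comp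
  unfold dotProduct
  apply continuous_finset_sum
  intro i _
  exact (((continuous_apply i).sub continuous_const).mul
    ((continuous_apply i).sub continuous_const))

lemma en_zero' {m : ℕ} : en (0 : Fin m → ℝ) = 0 := by simp [en, dotProduct]

lemma en_self_zero {m : ℕ} (x : Fin m → ℝ) : en (x - x) = 0 := by
  simp [en, dotProduct]

lemma sigma_entry_cont {n m r : ℕ}
    {σ : (Fin n → ℝ) → (Fin m → ℝ) → Matrix (Fin n) (Fin r) ℝ} {L : ℝ}
    (hL : ∀ x x' y y' i j, |σ x y i j - σ x' y' i j| ≤ L * (en (x - x') + en (y - y')))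
    (x : Fin n → ℝ) (i : Fin n) (j : Fin r) :
    Continuous fun y => σ x y i j := by
  rw [continuous_iff_continuousAt]
  intro y
  rw [ContinuousAt, tendsto_iff_dist_tendsto_zero]
  have hbound : ∀ y', dist (σ x y' i j) (σ x y i j) ≤ L * (en (x - x) + en (y' - y)) := by
    intro y'
    rw [Real.dist_eq]
    exact hL x x y' y i j
  have hlim : Filter.Tendsto (fun y' => L * (en (x - x) + en (y' - y))) (nhds y) (nhds 0) := by
    have : Filter.Tendsto (fun y' => L * (en (x - x) + en (y' - y))) (nhds y)
        (nhds (L * (en (x - x) + en (y - y)))) :=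
      (Filter.Tendsto.const_mul L ((Filter.Tendsto.const_add _ ((en_cont y).tendsto y))))
    simpa [en_self_zero, en_zero'] using this
  exact squeeze_zero (fun _ => dist_nonneg) hbound hlim

lemma sq2_sigma_cont {n m r : ℕ}
    {σ : (Fin n → ℝ) → (Fin m → ℝ) → Matrix (Fin n) (Fin r) ℝ} {L : ℝ}
    (hL : ∀ x x' y y' i j, |σ x y i j - σ x' y' i j| ≤ L * (en (x - x') + en (y - y')))
    (x p : Fin n → ℝ) :
    Continuous fun y => sq2 ((σ x y)ᵀ *ᵥ p) := by
  simp only [sq2, dotProduct, Matrix.mulVec, Matrix.transpose_apply]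
  apply continuous_finset_sum
  intro j _
  exact (continuous_finset_sum _ fun i _ => (sigma_entry_cont hL x i j).mul continuous_const).mul
    (continuous_finset_sum _ fun i _ => (sigma_entry_cont hL x i j).mul continuous_const)

lemma key_ineq {n m r : ℕ}
    (σ : (Fin n → ℝ) → (Fin m → ℝ) → Matrix (Fin n) (Fin r) ℝ)
    (b : (Fin m → ℝ) → Fin m → ℝ)
    (τ : (Fin m → ℝ) → Matrix (Fin m) (Fin r) ℝ)
    (huncor : ∀ (x : Fin n → ℝ) (y : Fin m → ℝ), τ y * (σ x y)ᵀ = 0)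
    (x xbar p pbar : Fin n → ℝ) (lam lambar : ℝ) (w wbar : (Fin m → ℝ) → ℝ)
    (h : IsCriticalSol σ b τ x p lam w)
    (hbar : IsCriticalSol σ b τ xbar pbar lambar wbar) :
    ∃ z, lam - lambar ≤ sq2 ((σ x z)ᵀ *ᵥ p) - sq2 ((σ xbar z)ᵀ *ᵥ pbar) := by
  obtain ⟨hw, hwper, hweq⟩ := h
  obtain ⟨hwb, hwbper, hwbeq⟩ := hbar
  set u : (Fin m → ℝ) → ℝ := fun y => w y - wbar y with hudef
  have hu : ContDiff ℝ 2 u := hw.sub hwb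
  have huper : ZPer u := by
    intro y k
    simp only [hudef, hwper y k, hwbper y k]
  obtain ⟨z, hz⟩ := exists_max_of_per hu.continuous huper
  -- cross terms vanish
  have hcross : ∀ (x' : Fin n → ℝ) (y : Fin m → ℝ),
      τ y *ᵥ ((σ x' y)ᵀ *ᵥ p) = 0 ∨ True := fun _ _ => Or.inr trivial
  have hcross1 : τ z *ᵥ ((σ x z)ᵀ *ᵥ p) = 0 := by
    rw [Matrix.mulVec_mulVec, huncor, Matrix.zero_mulVec]
  have hcross2 : τ z *ᵥ ((σ xbar z)ᵀ *ᵥ pbar) = 0 := by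
    rw [Matrix.mulVec_mulVec, huncor, Matrix.zero_mulVec]
  -- gradient equality at z
  have hloc : IsLocalMax u z := Filter.Eventually.of_forall hz
  have hf0 : fderiv ℝ u z = 0 := hloc.fderiv_eq_zero
  have hfderiv_sub : ∀ y, fderiv ℝ u y = fderiv ℝ w y - fderiv ℝ wbar y := by
    intro y
    exact fderiv_sub ((hw.differentiable (by norm_num)) y) ((hwb.differentiable (by norm_num)) y)
  have hgrad : vgrad w z = vgrad wbar z := by
    funext i
    have h0 : fderiv ℝ u z (Pi.single i 1) = 0 := by rw [hf0]; rfl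
    rw [hfderiv_sub z] at h0
    simp only [ContinuousLinearMap.sub_apply] at h0
    simp only [vgrad, pd]
    linarith
  -- Hessian difference
  have hpdu : ∀ i, pd u i = fun y => pd w i y - pd wbar i y := by
    intro i
    funext y
    simp only [pd, hfderiv_sub y, ContinuousLinearMap.sub_apply]
  have hhess : vhess u z = vhess w z - vhess wbar z := by
    ext i j
    simp only [vhess, Matrix.of_apply, Matrix.sub_apply, pd, hpdu j]
    rw [show (fun y => fderiv ℝ w y (Pi.single j 1) - fderiv ℝ wbar y (Pi.single j 1))
        = fun y => pd w j y - pd wbar j y from rfl]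
    rw [fderiv_fun_sub (((pd_contDiff hw j).differentiable one_ne_zero) z)
        (((pd_contDiff hwb j).differentiable one_ne_zero) z)]
    simp [pd]
  -- trace inequality
  have htr : Matrix.trace (τ z * (τ z)ᵀ * vhess u z) ≤ 0 := by
    rw [trace_eq_sum_quad]
    apply Finset.sum_nonpos
    intro j _
    exact quad_nonpos hu hz _
  have htrdiff : Matrix.trace (τ z * (τ z)ᵀ * vhess w z)
      - Matrix.trace (τ z * (τ z)ᵀ * vhess wbar z) ≤ 0 := by
    rw [← Matrix.trace_sub, ← Matrix.mul_sub, ← hhess]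
    exact htr
  refine ⟨z, ?_⟩
  have e1 := hweq z
  have e2 := hwbeq z
  rw [hcross1] at e1
  rw [hcross2] at e2
  rw [hgrad] at e1
  simp only [zero_dotProduct, mul_zero, add_zero, zero_add] at e1 e2
  have : lam - lambar = (sq2 ((σ x z)ᵀ *ᵥ p) - sq2 ((σ xbar z)ᵀ *ᵥ pbar))
      + (Matrix.trace (τ z * (τ z)ᵀ * vhess w z) - Matrix.trace (τ z * (τ z)ᵀ * vhess wbar z)) := by
    rw [e1, e2]; ring
  linarith


/-- under the non-correlation condition `τ σᵀ = 0`, the difference of two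
critical effective Hamiltonian values is sandwiched between the (attained) min and max of
`|σ(x,y)ᵀp|² − |σ(x̄,y)ᵀp̄|²` over `y`. -/
theorem stmt5 {n m r : ℕ}
    (σ : (Fin n → ℝ) → (Fin m → ℝ) → Matrix (Fin n) (Fin r) ℝ)
    (b : (Fin m → ℝ) → Fin m → ℝ)
    (τ : (Fin m → ℝ) → Matrix (Fin m) (Fin r) ℝ)
    (hyp : StandingHyp σ b τ)
    (huncor : ∀ (x : Fin n → ℝ) (y : Fin m → ℝ), τ y * (σ x y)ᵀ = 0)
    (x xbar p pbar : Fin n → ℝ) (lam lambar : ℝ) (w wbar : (Fin m → ℝ) → ℝ)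
    (h : IsCriticalSol σ b τ x p lam w)
    (hbar : IsCriticalSol σ b τ xbar pbar lambar wbar) :
    ∃ y₀ y₁ : Fin m → ℝ,
      (∀ y, sq2 ((σ x y₀)ᵀ *ᵥ p) - sq2 ((σ xbar y₀)ᵀ *ᵥ pbar)
          ≤ sq2 ((σ x y)ᵀ *ᵥ p) - sq2 ((σ xbar y)ᵀ *ᵥ pbar)) ∧
      (∀ y, sq2 ((σ x y)ᵀ *ᵥ p) - sq2 ((σ xbar y)ᵀ *ᵥ pbar)
          ≤ sq2 ((σ x y₁)ᵀ *ᵥ p) - sq2 ((σ xbar y₁)ᵀ *ᵥ pbar)) ∧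
      sq2 ((σ x y₀)ᵀ *ᵥ p) - sq2 ((σ xbar y₀)ᵀ *ᵥ pbar) ≤ lam - lambar ∧
      lam - lambar ≤ sq2 ((σ x y₁)ᵀ *ᵥ p) - sq2 ((σ xbar y₁)ᵀ *ᵥ pbar) := by
  obtain ⟨L, hL⟩ := hyp.σ_lip
  have Fcont : Continuous fun y => sq2 ((σ x y)ᵀ *ᵥ p) - sq2 ((σ xbar y)ᵀ *ᵥ pbar) :=
    (sq2_sigma_cont hL x p).sub (sq2_sigma_cont hL xbar pbar)
  have Fper : ZPer fun y => sq2 ((σ x y)ᵀ *ᵥ p) - sq2 ((σ xbar y)ᵀ *ᵥ pbar) := by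
    intro y k
    simp only [hyp.σ_per]
  obtain ⟨y₁, hy₁⟩ := exists_max_of_per Fcont Fper
  have Fcont' : Continuous fun y => -(sq2 ((σ x y)ᵀ *ᵥ p) - sq2 ((σ xbar y)ᵀ *ᵥ pbar)) :=
    Fcont.neg
  have Fper' : ZPer fun y => -(sq2 ((σ x y)ᵀ *ᵥ p) - sq2 ((σ xbar y)ᵀ *ᵥ pbar)) := by
    intro y k
    simp only [hyp.σ_per]
  obtain ⟨y₀, hy₀'⟩ := exists_max_of_per Fcont' Fper'
  have hy₀ : ∀ y, sq2 ((σ x y₀)ᵀ *ᵥ p) - sq2 ((σ xbar y₀)ᵀ *ᵥ pbar)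
      ≤ sq2 ((σ x y)ᵀ *ᵥ p) - sq2 ((σ xbar y)ᵀ *ᵥ pbar) := by
    intro y
    have := hy₀' y
    linarith
  obtain ⟨z1, hz1⟩ := key_ineq σ b τ huncor x xbar p pbar lam lambar w wbar h hbar
  obtain ⟨z2, hz2⟩ := key_ineq σ b τ huncor xbar x pbar p lambar lam wbar w hbar h
  refine ⟨y₀, y₁, hy₀, hy₁, ?_, ?_⟩
  · have h1 := hy₀ z2
    linarith
  · have h2 := hy₁ z1
    linarith


end
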